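/- Let p be a prime and let S be a subset of 𝔽_p with |S| ≥ 2. Then for every mod-p form ψ : 𝔽_p^n → 𝔽_p one has |𝔼_{x∈S^n} e^{2πi·ψ(x)/p}| ≤ (1 − p^{−2})^{|Z(ψ)|}, where the expectation is over x uniform in S^n and ψ(x) ∈ 𝔽_p is lifted to an integer in {0, 1, …, p−1} in the exponential. -/

import Mathlib

open Finset

/-- The support of a mod-p form given by its coefficient vector. -/
def supp {p n : ℕ} (φ : Fin n → ZMod p) : Finset (Fin n) :=
  Finset.univ.filter fun i => φ i ≠ 0

/-- Evaluation of a mod-p form (given by coefficients) at a point. -/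
def evalForm {p n : ℕ} (φ x : Fin n → ZMod p) : ZMod p := ∑ i, φ i * x i

/-- The sumset a₁S + ⋯ + a_mS. -/
def sumsetSub {p m : ℕ} (a : Fin m → ZMod p) (S : Finset (ZMod p)) : Finset (ZMod p) :=
  (Fintype.piFinset fun _ : Fin m => S).image fun s => ∑ i, a i * s i

/-- L(S,E): smallest L such that for all nonzero a₁,…,a_L the sumset a₁S+⋯+a_LS ⊄ E. -/
noncomputable def LSE {p : ℕ} (S E : Finset (ZMod p)) : ℕ :=
  sInf {L : ℕ | ∀ a : Fin L → ZMod p, (∀ i, a i ≠ 0) → ¬ sumsetSub a S ⊆ E}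

/-- β(p,S) = |S|^{-⌈(p-1)/(|S|-1)⌉}. -/
noncomputable def betaPS (p : ℕ) (S : Finset (ZMod p)) : ℝ :=
  ((S.card : ℝ) ^ ⌈((p : ℝ) - 1) / ((S.card : ℝ) - 1)⌉₊)⁻¹

noncomputable def ch (p : ℕ) (a : ZMod p) : ℂ :=
  Complex.exp (2 * Real.pi * Complex.I * (a.val : ℂ) / (p : ℂ))

lemma ch_natCast (p : ℕ) [NeZero p] (m : ℕ) :
    ch p (m : ZMod p) = Complex.exp (2 * Real.pi * Complex.I * (m : ℂ) / (p : ℂ)) := by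
  have hp : (p : ℂ) ≠ 0 := Nat.cast_ne_zero.2 (NeZero.ne p)
  have hval : ((m : ZMod p)).val = m % p := ZMod.val_natCast p m
  obtain ⟨q, r, hqr, hr⟩ : ∃ q r : ℕ, m = p * q + r ∧ m % p = r :=
    ⟨m / p, m % p, (Nat.div_add_mod m p).symm.trans (by ring), rfl⟩
  have hval2 : ((m : ZMod p)).val = r := by rw [hval, hr]
  rw [ch, hval2, hqr]
  rw [show ((p * q + r : ℕ) : ℂ) = (p : ℂ) * q + r by push_cast; ring]
  rw [show 2 * (Real.pi : ℂ) * Complex.I * ((p : ℂ) * q + r) / p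
      = 2 * (Real.pi : ℂ) * Complex.I * (r : ℂ) / p + (q : ℤ) * (2 * Real.pi * Complex.I)
      by push_cast; field_simp; ring]
  rw [Complex.exp_add, Complex.exp_int_mul_two_pi_mul_I, mul_one]

lemma ch_add (p : ℕ) [NeZero p] (a b : ZMod p) : ch p (a + b) = ch p a * ch p b := by
  have h : a + b = ((a.val + b.val : ℕ) : ZMod p) := by
    push_cast [ZMod.natCast_val, ZMod.cast_id]
    rfl
  rw [h, ch_natCast, Nat.cast_add]
  rw [show 2 * (Real.pi:ℂ) * Complex.I * ((a.val:ℂ) + (b.val:ℂ)) / p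
      = 2 * (Real.pi:ℂ) * Complex.I * (a.val:ℂ) / p + 2 * (Real.pi:ℂ) * Complex.I * (b.val:ℂ)/p by ring,
    Complex.exp_add]
  rfl

lemma ch_zero (p : ℕ) [NeZero p] : ch p 0 = 1 := by
  simp [ch]

lemma ch_eq (p : ℕ) (a : ZMod p) :
    ch p a = Complex.exp ((2 * Real.pi * a.val / p : ℝ) * Complex.I) := by
  rw [ch]; congr 1; push_cast; ring

lemma abs_ch (p : ℕ) (a : ZMod p) : ‖ch p a‖ = 1 := by
  rw [ch_eq]; exact Complex.norm_exp_ofReal_mul_I _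

lemma ch_re (p : ℕ) (a : ZMod p) : (ch p a).re = Real.cos (2 * Real.pi * a.val / p) := by
  rw [ch_eq, Complex.exp_ofReal_mul_I_re]

lemma ch_mul_conj (p : ℕ) [NeZero p] (a b : ZMod p) :
    ch p a * (starRingEnd ℂ) (ch p b) = ch p (a - b) := by
  have h1 : ch p (a - b) * ch p b = ch p a := by rw [← ch_add, sub_add_cancel]
  have h2 : ch p b * (starRingEnd ℂ) (ch p b) = 1 := by
    rw [Complex.mul_conj, Complex.normSq_eq_norm_sq, abs_ch]; norm_num
  calc ch p a * (starRingEnd ℂ) (ch p b) = ch p (a - b) * (ch p b * (starRingEnd ℂ) (ch p b)) := by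
        rw [← h1]; ring
    _ = ch p (a - b) := by rw [h2, mul_one]

lemma ch_sum (p : ℕ) [NeZero p] {ι : Type*} (t : Finset ι) (g : ι → ZMod p) :
    ch p (∑ i ∈ t, g i) = ∏ i ∈ t, ch p (g i) := by
  induction t using Finset.cons_induction with
  | empty => simp [ch_zero]
  | cons i t hi ih => rw [Finset.sum_cons, Finset.prod_cons, ch_add, ih]

lemma cos_nat_bound (p : ℕ) (hp : 2 ≤ p) {k : ℕ} (hk1 : 1 ≤ k) (hk2 : 2 * k ≤ p) :
    Real.cos (2 * Real.pi * k / p) ≤ 1 - 8 / (p : ℝ) ^ 2 := by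
  have hp0 : (0:ℝ) < p := by positivity
  have hx0 : (0:ℝ) ≤ 2 * Real.pi * k / p := by positivity
  have hxpi : 2 * Real.pi * k / p ≤ Real.pi := by
    rw [div_le_iff₀ hp0]
    have : (2:ℝ) * k ≤ p := by exact_mod_cast hk2
    nlinarith [Real.pi_pos]
  have habs : |2 * Real.pi * k / p| ≤ Real.pi := by rwa [_root_.abs_of_nonneg hx0]
  have h := Real.cos_le_one_sub_mul_cos_sq habs
  have hk1' : (1:ℝ) ≤ k := by exact_mod_cast hk1
  have hpi := Real.pi_pos
  have hxval : 2 / Real.pi ^ 2 * (2 * Real.pi * k / p) ^ 2 = 8 * (k:ℝ)^2 / (p:ℝ)^2 := by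
    field_simp; ring
  have key : 8 / (p:ℝ)^2 ≤ 2 / Real.pi ^ 2 * (2 * Real.pi * k / p) ^ 2 := by
    rw [hxval]
    gcongr
    nlinarith
  linarith

lemma cos_bound (p : ℕ) [NeZero p] (hp : 2 ≤ p) {b : ZMod p} (hb : b ≠ 0) :
    Real.cos (2 * Real.pi * b.val / p) ≤ 1 - 8 / (p : ℝ) ^ 2 := by
  have hk1 : 1 ≤ b.val := Nat.one_le_iff_ne_zero.2 fun h => hb ((ZMod.val_eq_zero b).1 h)
  have hklt : b.val < p := ZMod.val_lt b
  by_cases h : 2 * b.val ≤ p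
  · exact cos_nat_bound p hp hk1 h
  · have hm1 : 1 ≤ p - b.val := by omega
    have hm2 : 2 * (p - b.val) ≤ p := by omega
    have hcast : ((p - b.val : ℕ) : ℝ) = (p : ℝ) - b.val := by
      push_cast [Nat.cast_sub hklt.le]; ring
    have heq : Real.cos (2 * Real.pi * b.val / p)
        = Real.cos (2 * Real.pi * ((p - b.val : ℕ) : ℝ) / p) := by
      rw [hcast, show 2 * Real.pi * ((p:ℝ) - b.val) / p = 2 * Real.pi - 2 * Real.pi * b.val / p by
        field_simp, Real.cos_two_pi_sub]
    rw [heq]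
    exact cos_nat_bound p hp hm1 hm2

lemma charSum_le {p : ℕ} (hp : p.Prime) (S : Finset (ZMod p)) (hS : 2 ≤ S.card)
    {a : ZMod p} (ha : a ≠ 0) :
    ‖∑ s ∈ S, ch p (a * s)‖ ≤ (S.card : ℝ) * (1 - ((p:ℝ)⁻¹) ^ 2) := by
  haveI : Fact p.Prime := ⟨hp⟩
  have hp2 : 2 ≤ p := hp.two_le
  have hpR : (2:ℝ) ≤ p := by exact_mod_cast hp2
  have hcR : (2:ℝ) ≤ S.card := by exact_mod_cast hS
  set T := ∑ s ∈ S, ch p (a * s) with hT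
  have habs2 : ‖T‖ ^ 2 = (T * (starRingEnd ℂ) T).re := by
    rw [Complex.mul_conj, Complex.ofReal_re, Complex.normSq_eq_norm_sq]
  have hTT : T * (starRingEnd ℂ) T = ∑ s ∈ S, ∑ t ∈ S, ch p (a * (s - t)) := by
    rw [hT, map_sum, Finset.sum_mul_sum]
    refine Finset.sum_congr rfl fun s _ => Finset.sum_congr rfl fun t _ => ?_
    rw [ch_mul_conj, ← mul_sub]
  have hre : (T * (starRingEnd ℂ) T).re
      = ∑ s ∈ S, ∑ t ∈ S, Real.cos (2 * Real.pi * ((a * (s - t)).val : ℝ) / p) := by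
    rw [hTT, Complex.re_sum]
    refine Finset.sum_congr rfl fun s _ => ?_
    rw [Complex.re_sum]
    exact Finset.sum_congr rfl fun t _ => ch_re p _
  have inner : ∀ s ∈ S, ∑ t ∈ S, Real.cos (2 * Real.pi * ((a * (s - t)).val : ℝ) / p)
      ≤ 1 + ((S.card : ℝ) - 1) * (1 - 8 / (p:ℝ)^2) := by
    intro s hs
    rw [← Finset.sum_erase_add S _ hs]
    have hdiag : Real.cos (2 * Real.pi * ((a * (s - s)).val : ℝ) / p) = 1 := by
      simp
    rw [hdiag]
    have hrest : ∑ t ∈ S.erase s, Real.cos (2 * Real.pi * ((a * (s - t)).val : ℝ) / p)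
        ≤ (S.erase s).card • (1 - 8 / (p:ℝ)^2) := by
      refine Finset.sum_le_card_nsmul _ _ _ fun t ht => ?_
      exact cos_bound p hp2 (mul_ne_zero ha (sub_ne_zero.2 (Finset.ne_of_mem_erase ht).symm))
    have hcard : ((S.erase s).card : ℝ) = (S.card : ℝ) - 1 := by
      rw [Finset.card_erase_of_mem hs, Nat.cast_sub (by omega)]
      norm_num
    rw [nsmul_eq_mul, hcard] at hrest
    linarith
  have hsum : ∑ s ∈ S, ∑ t ∈ S, Real.cos (2 * Real.pi * ((a * (s - t)).val : ℝ) / p)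
      ≤ (S.card : ℝ) * (1 + ((S.card : ℝ) - 1) * (1 - 8 / (p:ℝ)^2)) := by
    have := Finset.sum_le_card_nsmul S _ _ inner
    rwa [nsmul_eq_mul] at this
  have hsq : ‖T‖ ^ 2 ≤ ((S.card : ℝ) * (1 - ((p:ℝ)⁻¹) ^ 2)) ^ 2 := by
    rw [habs2, hre]
    refine hsum.trans ?_
    have hq : (0:ℝ) < (p:ℝ)^2 := by positivity
    rw [inv_pow, ← one_div]
    have e1 : (1:ℝ) / (p:ℝ)^2 ≤ 1/4 := by
      rw [div_le_div_iff₀ (by positivity) (by norm_num)]; nlinarith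
    have e2 : (8:ℝ) / (p:ℝ)^2 = 8 * (1 / (p:ℝ)^2) := by ring
    set u := (1:ℝ) / (p:ℝ)^2 with hu
    have hu0 : 0 < u := by positivity
    set c := (S.card : ℝ)
    rw [e2]
    nlinarith [mul_nonneg hu0.le (show (0:ℝ) ≤ 6*c^2 - 8*c by nlinarith), sq_nonneg (c*u)]
  have hB : (0:ℝ) ≤ (S.card : ℝ) * (1 - ((p:ℝ)⁻¹) ^ 2) := by
    have : ((p:ℝ)⁻¹) ^ 2 ≤ 1 := by
      rw [inv_pow]
      exact inv_le_one_of_one_le₀ (by nlinarith)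
    nlinarith
  have := Real.sqrt_le_sqrt hsq
  rwa [Real.sqrt_sq (norm_nonneg T), Real.sqrt_sq hB] at this

theorem stmt_1 {p n : ℕ} (hp : p.Prime) (S : Finset (ZMod p)) (hS : 2 ≤ S.card)
    (ψ : Fin n → ZMod p) :
    ‖(∑ x ∈ Fintype.piFinset fun _ : Fin n => S,
        Complex.exp (2 * Real.pi * Complex.I * ((evalForm ψ x).val : ℂ) / (p : ℂ)))
        / (S.card : ℂ) ^ n‖
      ≤ (1 - ((p : ℝ)⁻¹) ^ 2) ^ (supp ψ).card := by
  haveI : Fact p.Prime := ⟨hp⟩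
  have hpR : (2:ℝ) ≤ p := by exact_mod_cast hp.two_le
  have hcR : (2:ℝ) ≤ S.card := by exact_mod_cast hS
  have hr0 : (0:ℝ) ≤ 1 - ((p:ℝ)⁻¹) ^ 2 := by
    have : ((p:ℝ)⁻¹) ^ 2 ≤ 1 := by
      rw [inv_pow]; exact inv_le_one_of_one_le₀ (by nlinarith)
    linarith
  have hfact : (∑ x ∈ Fintype.piFinset fun _ : Fin n => S,
        Complex.exp (2 * Real.pi * Complex.I * ((evalForm ψ x).val : ℂ) / (p : ℂ)))
      = ∏ i, ∑ s ∈ S, ch p (ψ i * s) := by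
    rw [Finset.prod_univ_sum]
    refine Finset.sum_congr rfl fun x _ => ?_
    rw [← ch_sum]
    rfl
  rw [hfact, norm_div, norm_pow, Complex.norm_natCast, norm_prod]
  have hpow : (0:ℝ) < (S.card : ℝ) ^ n := by positivity
  rw [div_le_iff₀ hpow]
  have hbound : ∏ i, ‖∑ s ∈ S, ch p (ψ i * s)‖
      ≤ ∏ i : Fin n, ((S.card : ℝ) * if ψ i ≠ 0 then (1 - ((p:ℝ)⁻¹) ^ 2) else 1) := by
    refine Finset.prod_le_prod (fun i _ => norm_nonneg _) fun i _ => ?_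
    by_cases h : ψ i = 0
    · have h2 : ∑ s ∈ S, ch p (ψ i * s) = (S.card : ℂ) := by
        simp [h, ch_zero]
      rw [h2, Complex.norm_natCast, if_neg (not_not.2 h), mul_one]
    · rw [if_pos h]
      exact charSum_le hp S hS h
  refine hbound.trans (le_of_eq ?_)
  rw [Finset.prod_mul_distrib, Finset.prod_const, Finset.card_univ, Fintype.card_fin]
  have : (∏ i : Fin n, if ψ i ≠ 0 then (1 - ((p:ℝ)⁻¹) ^ 2) else 1)
      = (1 - ((p:ℝ)⁻¹) ^ 2) ^ (supp ψ).card := by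
    rw [← Finset.prod_filter, Finset.prod_const]
    rfl
  rw [this]
  ring
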